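/- Let r* ≥ 1 be an integer and let M, M* ∈ ℝ^{d₁×d₂} with rank(M*) ≤ r*. Then ‖M*‖_* − ‖M‖_* + ‖M − M*‖_* ≤ (1 + √2)·√(r*)·‖M − M*‖_F. -/

import Mathlib

noncomputable section

open Matrix

attribute [local instance] Matrix.normedAddCommGroup Matrix.normedSpace

/-- Euclidean norm on `ℝⁿ`. -/
def enorm {n : ℕ} (x : Fin n → ℝ) : ℝ := Real.sqrt (∑ i, x i ^ 2)

/-- Frobenius norm of a real matrix. -/
def frob {m n : ℕ} (A : Matrix (Fin m) (Fin n) ℝ) : ℝ := Real.sqrt (∑ i, ∑ j, A i j ^ 2)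

/-- Trace inner product `⟨A,B⟩ = tr(AᵀB)`. -/
def tip {m n : ℕ} (A B : Matrix (Fin m) (Fin n) ℝ) : ℝ := ∑ i, ∑ j, A i j * B i j

/-- Spectral (operator) norm: largest singular value. -/
def opNorm {m n : ℕ} (A : Matrix (Fin m) (Fin n) ℝ) : ℝ :=
  sSup {t | ∃ x : Fin n → ℝ, _root_.enorm x ≤ 1 ∧ t = _root_.enorm (A.mulVec x)}

/-- Nuclear norm: `tr √(AᴴA)`, the sum of the singular values. -/
def nucNorm {m n : ℕ} (A : Matrix (Fin m) (Fin n) ℝ) : ℝ :=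
  ((Matrix.posSemidef_conjTranspose_mul_self A).1.eigenvectorUnitary.1 *
    diagonal ((RCLike.ofReal : ℝ → ℝ) ∘ Real.sqrt ∘
      (Matrix.posSemidef_conjTranspose_mul_self A).1.eigenvalues) *
    (star (Matrix.posSemidef_conjTranspose_mul_self A).1.eigenvectorUnitary :
      Matrix (Fin n) (Fin n) ℝ)).trace

/-- The `j`-th largest singular value of a real matrix (`1`-indexed):
the list of square roots of eigenvalues of `AᴴA`, sorted in decreasing order. -/
def singVal {m n : ℕ} (A : Matrix (Fin m) (Fin n) ℝ) (j : ℕ) : ℝ :=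
  (((List.ofFn ((show (Aᵀ * A).IsHermitian by simpa using Matrix.isHermitian_conjTranspose_mul_self A).eigenvalues)).map
      Real.sqrt).insertionSort (· ≥ ·)).getD (j - 1) 0

/-- A second-order critical point of `f`: zero gradient and positive-semidefinite
Hessian quadratic form. -/
def IsSecondOrderCriticalPoint {E : Type*} [NormedAddCommGroup E] [NormedSpace ℝ E]
    (f : E → ℝ) (x : E) : Prop :=
  fderiv ℝ f x = 0 ∧ ∀ v : E, 0 ≤ fderiv ℝ (fun y => fderiv ℝ f y v) x v

/-- The gradient of `φ` at `M`, w.r.t. the trace inner product. -/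
def gradM {m n : ℕ} (φ : Matrix (Fin m) (Fin n) ℝ → ℝ) (M : Matrix (Fin m) (Fin n) ℝ) :
    Matrix (Fin m) (Fin n) ℝ :=
  Matrix.of fun i j => fderiv ℝ φ M (Matrix.single i j 1)

/-- Hessian quadratic form `∇²φ(M)[E,E]`. -/
def hess {m n : ℕ} (φ : Matrix (Fin m) (Fin n) ℝ → ℝ) (M E : Matrix (Fin m) (Fin n) ℝ) : ℝ :=
  fderiv ℝ (fun N => fderiv ℝ φ N E) M E

/-- Adjoint of a linear measurement map, w.r.t. the trace inner product. -/
def adj {m n p : ℕ} (A : Matrix (Fin m) (Fin n) ℝ →ₗ[ℝ] (Fin p → ℝ)) (ξ : Fin p → ℝ) :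
    Matrix (Fin m) (Fin n) ℝ :=
  Matrix.of fun i j => ∑ k, ξ k * A (Matrix.single i j 1) k

/-- The subspace `S_d` of `d × d` real symmetric matrices. -/
def SymSpace (d : ℕ) : Submodule ℝ (Matrix (Fin d) (Fin d) ℝ) where
  carrier := {A | Aᵀ = A}
  add_mem' := by intro a b ha hb; simp only [Set.mem_setOf_eq, Matrix.transpose_add] at *
                 rw [ha, hb]
  zero_mem' := by simp
  smul_mem' := by intro c A hA; simp only [Set.mem_setOf_eq, Matrix.transpose_smul] at *
                  rw [hA]

lemma mem_symSpace {d : ℕ} {A : Matrix (Fin d) (Fin d) ℝ} : A ∈ SymSpace d ↔ Aᵀ = A := Iff.rfl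

lemma stdBasis_symm {d : ℕ} (i j : Fin d) :
    Matrix.single i j (1:ℝ) + Matrix.single j i 1 ∈ SymSpace d := by
  rw [mem_symSpace, Matrix.transpose_add]
  ext a b
  simp only [Matrix.add_apply, Matrix.transpose_apply, Matrix.single, Matrix.of_apply]
  rw [add_comm]
  congr 1 <;> · congr 1; rw [eq_iff_iff, and_comm]

/-- The symmetrized elementary matrix `E_ij + E_ji` as an element of `S_d`. -/
def symBasis {d : ℕ} (i j : Fin d) : SymSpace d :=
  ⟨Matrix.single i j 1 + Matrix.single j i 1, stdBasis_symm i j⟩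

lemma mmT_mem {d r : ℕ} (U : Matrix (Fin d) (Fin r) ℝ) : U * Uᵀ ∈ SymSpace d := by
  rw [mem_symSpace, Matrix.transpose_mul, Matrix.transpose_transpose]

/-- `U ↦ UUᵀ` as an element of `S_d`. -/
def mmT {d r : ℕ} (U : Matrix (Fin d) (Fin r) ℝ) : SymSpace d := ⟨U * Uᵀ, mmT_mem U⟩

/-- The gradient of `φ : S_d → ℝ` at `M`, as the symmetric matrix representing the
derivative w.r.t. the trace inner product on `S_d`. -/
def gradS {d : ℕ} (φ : SymSpace d → ℝ) (M : SymSpace d) : Matrix (Fin d) (Fin d) ℝ :=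
  Matrix.of fun i j => (1/2) * fderiv ℝ φ M (symBasis i j)

/-- Hessian quadratic form of `φ : S_d → ℝ`. -/
def hessS {d : ℕ} (φ : SymSpace d → ℝ) (M E : SymSpace d) : ℝ :=
  fderiv ℝ (fun N => fderiv ℝ φ N E) M E

/-- Adjoint of a linear map `𝒜 : S_d → ℝⁿ` w.r.t. the trace inner product on `S_d`. -/
def adjS {d p : ℕ} (A : SymSpace d →ₗ[ℝ] (Fin p → ℝ)) (ξ : Fin p → ℝ) :
    Matrix (Fin d) (Fin d) ℝ :=
  Matrix.of fun i j => (1/2) * ∑ k, ξ k * A (symBasis i j) k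

/-- `P` is the orthogonal projection matrix onto the column space of `U`:
it is symmetric, idempotent, and has the same range as `U`. -/
def IsOrthProjCol {d r : ℕ} (P : Matrix (Fin d) (Fin d) ℝ) (U : Matrix (Fin d) (Fin r) ℝ) :
    Prop :=
  Pᵀ = P ∧ P * P = P ∧ P * U = U ∧ ∃ W : Matrix (Fin r) (Fin d) ℝ, P = U * W


namespace NNC
open Matrix

/-! ### Mini functional calculus for hermitian real matrices -/

variable {ν : Type*} [Fintype ν] [DecidableEq ν]

/-- functional calculus via the spectral theorem -/
noncomputable def fcal {H : Matrix ν ν ℝ} (hH : H.IsHermitian) (f : ℝ → ℝ) : Matrix ν ν ℝ :=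
  (hH.eigenvectorUnitary : Matrix ν ν ℝ) * diagonal (f ∘ hH.eigenvalues) *
    star (hH.eigenvectorUnitary : Matrix ν ν ℝ)

variable {H : Matrix ν ν ℝ} (hH : H.IsHermitian) (f g : ℝ → ℝ)

lemma star_mul_self_eq_one : star (hH.eigenvectorUnitary : Matrix ν ν ℝ) *
    (hH.eigenvectorUnitary : Matrix ν ν ℝ) = 1 :=
  (Matrix.mem_unitaryGroup_iff').mp hH.eigenvectorUnitary.2

lemma mul_star_self_eq_one : (hH.eigenvectorUnitary : Matrix ν ν ℝ) *
    star (hH.eigenvectorUnitary : Matrix ν ν ℝ) = 1 :=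
  (Matrix.mem_unitaryGroup_iff).mp hH.eigenvectorUnitary.2

lemma fcal_mul : fcal hH f * fcal hH g = fcal hH (fun t => f t * g t) := by
  unfold fcal
  rw [show ∀ A B C D E F : Matrix ν ν ℝ, A*B*C*(D*E*F) = A*(B*((C*D)*E))*F by
    intros; noncomm_ring]
  rw [star_mul_self_eq_one, one_mul, diagonal_mul_diagonal]
  rfl

lemma fcal_id : fcal hH (fun t => t) = H := by
  have h := hH.spectral_theorem
  rw [fcal, show (fun t : ℝ => t) ∘ hH.eigenvalues = RCLike.ofReal ∘ hH.eigenvalues from rfl]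
  exact h.symm

lemma fcal_trace : (fcal hH f).trace = ∑ i, f (hH.eigenvalues i) := by
  rw [fcal, trace_mul_cycle, star_mul_self_eq_one, one_mul, trace_diagonal]
  rfl

lemma fcal_conjTranspose : (fcal hH f)ᴴ = fcal hH f := by
  have hst : star (f ∘ hH.eigenvalues) = f ∘ hH.eigenvalues := funext fun i => star_trivial _
  rw [fcal, conjTranspose_mul, conjTranspose_mul, diagonal_conjTranspose, hst,
    star_eq_conjTranspose, conjTranspose_conjTranspose, mul_assoc]

lemma fcal_one : fcal hH (fun _ => 1) = 1 := by
  rw [fcal, show (fun _ : ℝ => (1:ℝ)) ∘ hH.eigenvalues = fun _ => 1 from rfl, diagonal_one,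
    mul_one, mul_star_self_eq_one]

lemma fcal_sub : fcal hH f - fcal hH g = fcal hH (fun t => f t - g t) := by
  unfold fcal
  rw [← sub_mul, ← mul_sub, diagonal_sub]
  rfl

lemma fcal_posSemidef (hf : ∀ x, 0 ≤ f x) : (fcal hH f).PosSemidef := by
  rw [fcal, star_eq_conjTranspose]
  exact (Matrix.PosSemidef.diagonal (fun i => hf _)).mul_mul_conjTranspose_same _

lemma psd_diag_nonneg {M : Matrix ν ν ℝ} (h : M.PosSemidef) (i : ν) : 0 ≤ M i i := by
  exact h.diag_nonneg

lemma sqrt_eq_fcal {A : Matrix ν ν ℝ} (hA : A.PosSemidef) :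
    (hA.1.eigenvectorUnitary.1 * diagonal ((RCLike.ofReal : ℝ → ℝ) ∘ Real.sqrt ∘ hA.1.eigenvalues) *
      (star hA.1.eigenvectorUnitary : Matrix ν ν ℝ)) = fcal hA.1 Real.sqrt := by
  unfold fcal
  rw [show RCLike.ofReal ∘ Real.sqrt ∘ hA.1.eigenvalues = Real.sqrt ∘ hA.1.eigenvalues by
    rw [RCLike.ofReal_real_eq_id]; rfl]

/-! ### Basic identities for `tip`, `frob`, `nucNorm` -/

variable {m n : ℕ}

lemma tip_eq_trace (A B : Matrix (Fin m) (Fin n) ℝ) : tip A B = (Aᴴ * B).trace := by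
  rw [tip, Matrix.trace, Finset.sum_comm]
  refine Finset.sum_congr rfl fun j _ => ?_
  simp [Matrix.diag, mul_apply, conjTranspose_apply]

lemma diag_conj_mul (A B : Matrix (Fin m) (Fin n) ℝ) (i : Fin n) :
    (Aᴴ * B) i i = ∑ k, A k i * B k i := by
  simp [mul_apply, conjTranspose_apply]

lemma tip_add_left (A B C : Matrix (Fin m) (Fin n) ℝ) :
    tip (A + B) C = tip A C + tip B C := by
  simp [tip, add_mul, Finset.sum_add_distrib]

lemma tip_add_right (A B C : Matrix (Fin m) (Fin n) ℝ) :
    tip A (B + C) = tip A B + tip A C := by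
  simp [tip, mul_add, Finset.sum_add_distrib]

lemma tip_self_nonneg (A : Matrix (Fin m) (Fin n) ℝ) : 0 ≤ tip A A :=
  Finset.sum_nonneg fun i _ => Finset.sum_nonneg fun j _ => mul_self_nonneg _

lemma frob_eq_sqrt_tip (A : Matrix (Fin m) (Fin n) ℝ) : frob A = Real.sqrt (tip A A) := by
  rw [frob, tip]
  congr 1
  exact Finset.sum_congr rfl fun i _ => Finset.sum_congr rfl fun j _ => sq (A i j)

lemma frob_nonneg (A : Matrix (Fin m) (Fin n) ℝ) : 0 ≤ frob A := Real.sqrt_nonneg _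

lemma nucNorm_eq (X : Matrix (Fin m) (Fin n) ℝ) :
    nucNorm X = ∑ i, Real.sqrt ((Matrix.posSemidef_conjTranspose_mul_self X).1.eigenvalues i) := by
  rw [nucNorm, sqrt_eq_fcal (Matrix.posSemidef_conjTranspose_mul_self X), fcal_trace]

lemma sqrt_congr {A B : Matrix ν ν ℝ} (h : A = B) (hA : A.PosSemidef) (hB : B.PosSemidef) :
    fcal hA.1 Real.sqrt = fcal hB.1 Real.sqrt := by subst h; rfl

lemma nucNorm_congr (X Y : Matrix (Fin m) (Fin n) ℝ) (h : Xᴴ * X = Yᴴ * Y) :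
    nucNorm X = nucNorm Y := by
  rw [nucNorm, nucNorm, sqrt_eq_fcal (Matrix.posSemidef_conjTranspose_mul_self X),
    sqrt_eq_fcal (Matrix.posSemidef_conjTranspose_mul_self Y)]
  exact congrArg Matrix.trace (sqrt_congr h (Matrix.posSemidef_conjTranspose_mul_self X)
    (Matrix.posSemidef_conjTranspose_mul_self Y))

lemma nucNorm_neg (X : Matrix (Fin m) (Fin n) ℝ) : nucNorm (-X) = nucNorm X :=
  nucNorm_congr _ _ (by simp)

/-! ### Duality for the nuclear norm -/

lemma tip_le_nucNorm (G X : Matrix (Fin m) (Fin n) ℝ)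
    (hG : ((1 : Matrix (Fin n) (Fin n) ℝ) - Gᴴ * G).PosSemidef) : tip G X ≤ nucNorm X := by
  set hp := Matrix.posSemidef_conjTranspose_mul_self X with hhp
  set hH : (Xᴴ * X).IsHermitian := hp.1 with hhH
  set U : Matrix (Fin n) (Fin n) ℝ := (hH.eigenvectorUnitary : Matrix (Fin n) (Fin n) ℝ) with hU
  have hUUh : U * Uᴴ = 1 := by rw [← star_eq_conjTranspose]; exact mul_star_self_eq_one hH
  have hUhU : Uᴴ * U = 1 := by rw [← star_eq_conjTranspose]; exact star_mul_self_eq_one hH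
  have h1 : tip G X = ((G * U)ᴴ * (X * U)).trace := by
    rw [tip_eq_trace]
    have e : (G * U)ᴴ * (X * U) = Uᴴ * (Gᴴ * X) * U := by
      simp only [conjTranspose_mul, Matrix.mul_assoc]
    rw [e, trace_mul_cycle, hUUh, one_mul]
  have hdiagXU : ∀ i, ∑ k, (X * U) k i ^ 2 = hH.eigenvalues i := by
    intro i
    have h2 : (X * U)ᴴ * (X * U) = diagonal (RCLike.ofReal ∘ hH.eigenvalues) := by
      have key := hH.conjStarAlgAut_star_eigenvectorUnitary
      rw [Unitary.conjStarAlgAut_apply, Unitary.coe_star, star_star] at key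
      rw [star_eq_conjTranspose] at key
      simp only [conjTranspose_mul, Matrix.mul_assoc] at key ⊢
      exact key
    have h3 := diag_conj_mul (X * U) (X * U) i
    rw [h2] at h3
    calc ∑ k, (X * U) k i ^ 2 = ∑ k, (X * U) k i * (X * U) k i :=
          Finset.sum_congr rfl fun k _ => sq _
      _ = diagonal (RCLike.ofReal ∘ hH.eigenvalues) i i := h3.symm
      _ = hH.eigenvalues i := by simp [RCLike.ofReal_real_eq_id]
  have hdiagGU : ∀ i, ∑ k, (G * U) k i ^ 2 ≤ 1 := by
    intro i
    have hpsd : (Uᴴ * ((1 : Matrix (Fin n) (Fin n) ℝ) - Gᴴ * G) * U).PosSemidef :=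
      hG.conjTranspose_mul_mul_same U
    have h5 : Uᴴ * ((1 : Matrix (Fin n) (Fin n) ℝ) - Gᴴ * G) * U
        = 1 - (G * U)ᴴ * (G * U) := by
      have e : (G * U)ᴴ * (G * U) = Uᴴ * (Gᴴ * G) * U := by
        simp only [conjTranspose_mul, Matrix.mul_assoc]
      rw [e, mul_sub, sub_mul, mul_one, hUhU]
    rw [h5] at hpsd
    have h4 := psd_diag_nonneg hpsd i
    have h7 : ((1 : Matrix (Fin n) (Fin n) ℝ) - (G * U)ᴴ * (G * U)) i i
        = 1 - ((G * U)ᴴ * (G * U)) i i := by simp [Matrix.sub_apply, Matrix.one_apply]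
    rw [h7, diag_conj_mul (G * U) (G * U) i] at h4
    calc ∑ k, (G * U) k i ^ 2 = ∑ k, (G * U) k i * (G * U) k i :=
          Finset.sum_congr rfl fun k _ => sq _
      _ ≤ 1 := by linarith
  rw [h1, nucNorm_eq X, Matrix.trace]
  calc ∑ i, ((G * U)ᴴ * (X * U)).diag i
      = ∑ i, ∑ k, (G * U) k i * (X * U) k i :=
        Finset.sum_congr rfl fun i _ => diag_conj_mul _ _ i
    _ ≤ ∑ i, Real.sqrt (hH.eigenvalues i) := by
        refine Finset.sum_le_sum fun i _ => ?_
        calc ∑ k, (G * U) k i * (X * U) k i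
            ≤ Real.sqrt (∑ k, (G * U) k i ^ 2) * Real.sqrt (∑ k, (X * U) k i ^ 2) :=
              Real.sum_mul_le_sqrt_mul_sqrt _ _ _
          _ ≤ 1 * Real.sqrt (hH.eigenvalues i) := by
              rw [hdiagXU i]
              exact mul_le_mul_of_nonneg_right
                (by rw [show (1:ℝ) = Real.sqrt 1 from (Real.sqrt_one).symm]
                    exact Real.sqrt_le_sqrt (hdiagGU i)) (Real.sqrt_nonneg _)
          _ = Real.sqrt (hH.eigenvalues i) := one_mul _

lemma exists_dual (Y : Matrix (Fin m) (Fin n) ℝ) :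
    ∃ G : Matrix (Fin m) (Fin n) ℝ, ((1 : Matrix (Fin n) (Fin n) ℝ) - Gᴴ * G).PosSemidef ∧
      tip G Y = nucNorm Y ∧
      (∀ P : Matrix (Fin m) (Fin m) ℝ, P * Y = Y → P * G = G) ∧
      (∀ Q : Matrix (Fin n) (Fin n) ℝ, Y * Q = Y → G * Q = G) := by
  set hp := Matrix.posSemidef_conjTranspose_mul_self Y with hhp
  set hH : (Yᴴ * Y).IsHermitian := hp.1 with hhH
  set g : ℝ → ℝ := fun t => (Real.sqrt t)⁻¹ with hg
  refine ⟨Y * fcal hH g, ?_, ?_, ?_, ?_⟩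
  · have e1 : (Y * fcal hH g)ᴴ * (Y * fcal hH g) = fcal hH g * (Yᴴ * Y) * fcal hH g := by
      simp only [conjTranspose_mul, fcal_conjTranspose, Matrix.mul_assoc]
    have h1 := fcal_mul hH g (fun t => t)
    rw [fcal_id] at h1
    have h2 := fcal_mul hH (fun t => g t * t) g
    rw [e1, h1, h2,
      show (1 : Matrix (Fin n) (Fin n) ℝ) = fcal hH (fun _ => 1) from (fcal_one hH).symm,
      fcal_sub]
    refine fcal_posSemidef _ _ fun t => ?_
    rcases le_or_gt t 0 with h | h
    · have hz : Real.sqrt t = 0 := Real.sqrt_eq_zero_of_nonpos h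
      simp [hg, hz]
    · have hs : Real.sqrt t ≠ 0 := ne_of_gt (Real.sqrt_pos.mpr h)
      have ht : Real.sqrt t * Real.sqrt t = t := Real.mul_self_sqrt h.le
      simp only [hg]
      rw [← ht]
      field_simp
      rw [Real.sqrt_sq (Real.sqrt_nonneg _)]
      simp
  · have e2 : (Y * fcal hH g)ᴴ * Y = fcal hH g * (Yᴴ * Y) := by
      simp only [conjTranspose_mul, fcal_conjTranspose, Matrix.mul_assoc]
    have h1 := fcal_mul hH g (fun t => t)
    rw [fcal_id] at h1
    rw [tip_eq_trace, e2, h1, fcal_trace, nucNorm_eq Y]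
    refine Finset.sum_congr rfl fun i _ => ?_
    have hnn : 0 ≤ hH.eigenvalues i := hp.eigenvalues_nonneg i
    rcases eq_or_lt_of_le hnn with h | h
    · rw [← h]; simp [hg]
    · have ht : Real.sqrt (hH.eigenvalues i) * Real.sqrt (hH.eigenvalues i) = hH.eigenvalues i :=
        Real.mul_self_sqrt hnn
      have hs : Real.sqrt (hH.eigenvalues i) ≠ 0 := ne_of_gt (Real.sqrt_pos.mpr h)
      simp only [hg]
      rw [← ht]
      field_simp
      rw [Real.sqrt_sq (Real.sqrt_nonneg _)]
  · intro P hP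
    rw [← Matrix.mul_assoc, hP]
  · intro Q hQ
    have h1 := fcal_mul hH (fun t => ((Real.sqrt t)⁻¹) ^ 3) (fun t => t)
    rw [fcal_id] at h1
    have hfun : g = fun t => ((Real.sqrt t)⁻¹) ^ 3 * t := by
      funext t
      rcases le_or_gt t 0 with h | h
      · have hz : Real.sqrt t = 0 := Real.sqrt_eq_zero_of_nonpos h
        simp [hg, hz]
      · have hs : Real.sqrt t ≠ 0 := ne_of_gt (Real.sqrt_pos.mpr h)
        have ht : Real.sqrt t * Real.sqrt t = t := Real.mul_self_sqrt h.le
        simp only [hg]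
        calc (Real.sqrt t)⁻¹
            = (Real.sqrt t)⁻¹ * (((Real.sqrt t)⁻¹ * Real.sqrt t) *
              ((Real.sqrt t)⁻¹ * Real.sqrt t)) := by rw [inv_mul_cancel₀ hs]; ring
          _ = ((Real.sqrt t)⁻¹) ^ 3 * (Real.sqrt t * Real.sqrt t) := by ring
          _ = ((Real.sqrt t)⁻¹) ^ 3 * t := by rw [ht]
    have hgh : fcal hH g = fcal hH (fun t => ((Real.sqrt t)⁻¹) ^ 3) * (Yᴴ * Y) := by
      rw [h1]
      exact congrArg (fcal hH) hfun
    have hfgQ : fcal hH g * Q = fcal hH g := by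
      rw [hgh, Matrix.mul_assoc, Matrix.mul_assoc, hQ]
    rw [Matrix.mul_assoc, hfgQ]

lemma nucNorm_add_le (A B : Matrix (Fin m) (Fin n) ℝ) :
    nucNorm (A + B) ≤ nucNorm A + nucNorm B := by
  obtain ⟨G, hG, ht, -, -⟩ := exists_dual (A + B)
  rw [← ht, tip_add_right]
  exact add_le_add (tip_le_nucNorm G A hG) (tip_le_nucNorm G B hG)

/-! ### Pinching inequality -/

lemma pinch (X : Matrix (Fin m) (Fin n) ℝ) (P : Matrix (Fin m) (Fin m) ℝ)
    (Q : Matrix (Fin n) (Fin n) ℝ) (hP : Pᴴ = P) (hP2 : P * P = P)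
    (hQ : Qᴴ = Q) (hQ2 : Q * Q = Q) :
    nucNorm (P * X * Q) + nucNorm ((1 - P) * X * (1 - Q)) ≤ nucNorm X := by
  obtain ⟨G₁, hG₁, ht₁, habs₁, habs₁'⟩ := exists_dual (P * X * Q)
  obtain ⟨G₂, hG₂, ht₂, habs₂, habs₂'⟩ := exists_dual ((1 - P) * X * (1 - Q))
  have hpp : (1 - P) * (1 - P) = 1 - P := by
    rw [mul_sub, mul_one, sub_mul, one_mul, hP2, sub_self, sub_zero]
  have hqq : (1 - Q) * (1 - Q) = 1 - Q := by
    rw [mul_sub, mul_one, sub_mul, one_mul, hQ2, sub_self, sub_zero]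
  have g1 : P * G₁ = G₁ := habs₁ P (by rw [← Matrix.mul_assoc, ← Matrix.mul_assoc, hP2])
  have g1' : G₁ * Q = G₁ := habs₁' Q (by rw [Matrix.mul_assoc, hQ2])
  have g2 : (1 - P) * G₂ = G₂ :=
    habs₂ _ (by rw [← Matrix.mul_assoc, ← Matrix.mul_assoc, hpp])
  have g2' : G₂ * (1 - Q) = G₂ := habs₂' _ (by rw [Matrix.mul_assoc, hqq])
  have hcross : G₁ᴴ * G₂ = 0 := by
    calc G₁ᴴ * G₂ = (P * G₁)ᴴ * ((1 - P) * G₂) := by rw [g1, g2]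
      _ = G₁ᴴ * ((Pᴴ * (1 - P)) * G₂) := by
          rw [conjTranspose_mul]
          simp only [Matrix.mul_assoc]
      _ = 0 := by
          rw [hP, mul_sub, mul_one, hP2, sub_self, Matrix.zero_mul, Matrix.mul_zero]
  have hcross' : G₂ᴴ * G₁ = 0 := by
    have h := congrArg conjTranspose hcross
    simpa [conjTranspose_mul] using h
  have hGG : (G₁ + G₂)ᴴ * (G₁ + G₂) = G₁ᴴ * G₁ + G₂ᴴ * G₂ := by
    rw [conjTranspose_add, Matrix.add_mul, Matrix.mul_add, Matrix.mul_add, hcross, hcross']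
    abel
  have hq1 : Qᴴ * (G₁ᴴ * G₁) * Q = G₁ᴴ * G₁ := by
    have e : Qᴴ * (G₁ᴴ * G₁) * Q = (G₁ * Q)ᴴ * (G₁ * Q) := by
      rw [conjTranspose_mul]
      simp only [Matrix.mul_assoc]
    rw [e, g1']
  have hq2 : (1 - Q)ᴴ * (G₂ᴴ * G₂) * (1 - Q) = G₂ᴴ * G₂ := by
    have e : (1 - Q)ᴴ * (G₂ᴴ * G₂) * (1 - Q) = (G₂ * (1 - Q))ᴴ * (G₂ * (1 - Q)) := by
      rw [conjTranspose_mul]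
      simp only [Matrix.mul_assoc]
    rw [e, g2']
  have hQ' : (1 - Q)ᴴ = 1 - Q := by rw [conjTranspose_sub, conjTranspose_one, hQ]
  have hsum : (1 : Matrix (Fin n) (Fin n) ℝ) - (G₁ + G₂)ᴴ * (G₁ + G₂)
      = Qᴴ * (1 - G₁ᴴ * G₁) * Q + (1 - Q)ᴴ * (1 - G₂ᴴ * G₂) * (1 - Q) := by
    rw [hGG]
    have e1 : Qᴴ * (1 - G₁ᴴ * G₁) * Q = Qᴴ * Q - Qᴴ * (G₁ᴴ * G₁) * Q := by
      rw [Matrix.mul_sub, Matrix.mul_one, Matrix.sub_mul]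
    have e2 : (1 - Q)ᴴ * (1 - G₂ᴴ * G₂) * (1 - Q)
        = (1 - Q)ᴴ * (1 - Q) - (1 - Q)ᴴ * (G₂ᴴ * G₂) * (1 - Q) := by
      rw [Matrix.mul_sub ((1 - Q)ᴴ) 1 (G₂ᴴ * G₂), Matrix.mul_one, Matrix.sub_mul]
    rw [e1, e2, hq1, hq2, hQ', hqq, hQ, hQ2]
    abel
  have hpsd : ((1 : Matrix (Fin n) (Fin n) ℝ) - (G₁ + G₂)ᴴ * (G₁ + G₂)).PosSemidef := by
    rw [hsum]
    exact (hG₁.conjTranspose_mul_mul_same Q).add (hG₂.conjTranspose_mul_mul_same (1 - Q))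
  have htip : tip (G₁ + G₂) X = nucNorm (P * X * Q) + nucNorm ((1 - P) * X * (1 - Q)) := by
    rw [tip_add_left]
    congr 1
    · have e : G₁ᴴ = Q * (G₁ᴴ * P) := by
        conv_lhs => rw [← g1', conjTranspose_mul, hQ]
        conv_lhs => rw [← g1, conjTranspose_mul, hP]
      calc tip G₁ X = (G₁ᴴ * X).trace := tip_eq_trace _ _
        _ = (Q * (G₁ᴴ * P) * X).trace := by rw [← e]
        _ = (X * Q * (G₁ᴴ * P)).trace := by rw [trace_mul_cycle]
        _ = ((G₁ᴴ * P) * (X * Q)).trace := by rw [trace_mul_comm]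
        _ = (G₁ᴴ * (P * X * Q)).trace := by rw [Matrix.mul_assoc, Matrix.mul_assoc]
        _ = tip G₁ (P * X * Q) := (tip_eq_trace _ _).symm
        _ = nucNorm (P * X * Q) := ht₁
    · have e : G₂ᴴ = (1 - Q) * (G₂ᴴ * (1 - P)) := by
        conv_lhs => rw [← g2', conjTranspose_mul, hQ']
        conv_lhs => rw [← g2, conjTranspose_mul,
          show (1 - P)ᴴ = 1 - P by rw [conjTranspose_sub, conjTranspose_one, hP]]
      calc tip G₂ X = (G₂ᴴ * X).trace := tip_eq_trace _ _
        _ = ((1 - Q) * (G₂ᴴ * (1 - P)) * X).trace := by rw [← e]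
        _ = (X * (1 - Q) * (G₂ᴴ * (1 - P))).trace := by rw [trace_mul_cycle]
        _ = ((G₂ᴴ * (1 - P)) * (X * (1 - Q))).trace := by rw [trace_mul_comm]
        _ = (G₂ᴴ * ((1 - P) * X * (1 - Q))).trace := by rw [Matrix.mul_assoc, Matrix.mul_assoc]
        _ = tip G₂ ((1 - P) * X * (1 - Q)) := (tip_eq_trace _ _).symm
        _ = nucNorm ((1 - P) * X * (1 - Q)) := ht₂
  rw [← htip]
  exact tip_le_nucNorm _ X hpsd

/-! ### Nuclear norm vs rank and Frobenius norm -/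

lemma nucNorm_le_sqrt_rank_mul_frob (X : Matrix (Fin m) (Fin n) ℝ) {k : ℕ} (hk : X.rank ≤ k) :
    nucNorm X ≤ Real.sqrt k * frob X := by
  set hp := Matrix.posSemidef_conjTranspose_mul_self X with hhp
  set hH : (Xᴴ * X).IsHermitian := hp.1 with hhH
  set lam : Fin n → ℝ := hH.eigenvalues with hlam
  have hnn : ∀ i, 0 ≤ lam i := fun i => hp.eigenvalues_nonneg i
  have hfrob : frob X = Real.sqrt (∑ i, lam i) := by
    rw [frob]
    congr 1
    have h1 : ∑ i, ∑ j, X i j ^ 2 = (Xᴴ * X).trace := by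
      rw [Matrix.trace, Finset.sum_comm]
      refine Finset.sum_congr rfl fun j _ => ?_
      simp [Matrix.diag, mul_apply, conjTranspose_apply, sq]
    have h2 := fcal_trace hH (fun t => t)
    rw [fcal_id] at h2
    rw [h1, h2]
  have hcard : ((Finset.filter (fun i => lam i ≠ 0) Finset.univ).card : ℝ) ≤ (k : ℝ) := by
    have h1 : (Xᴴ * X).rank = Fintype.card {i // lam i ≠ 0} := hH.rank_eq_card_non_zero_eigs
    have h2 : (Xᴴ * X).rank = X.rank := X.rank_conjTranspose_mul_self
    have h3 : (Finset.filter (fun i => lam i ≠ 0) Finset.univ).card = X.rank := by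
      rw [← h2, h1, Fintype.card_subtype]
    exact_mod_cast h3 ▸ hk
  rw [nucNorm_eq X, hfrob]
  set s := Finset.filter (fun i => lam i ≠ 0) Finset.univ with hs
  calc ∑ i, Real.sqrt (lam i) = ∑ i ∈ s, Real.sqrt (lam i) := by
        refine (Finset.sum_filter_of_ne fun i _ h => ?_).symm
        intro h0
        exact h (by rw [h0, Real.sqrt_zero])
    _ = ∑ i ∈ s, 1 * Real.sqrt (lam i) := by simp
    _ ≤ Real.sqrt (∑ i ∈ s, 1 ^ 2) * Real.sqrt (∑ i ∈ s, Real.sqrt (lam i) ^ 2) :=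
        Real.sum_mul_le_sqrt_mul_sqrt _ _ _
    _ = Real.sqrt (s.card : ℝ) * Real.sqrt (∑ i ∈ s, lam i) := by
        rw [show ∑ _i ∈ s, (1:ℝ) ^ 2 = (s.card : ℝ) by simp]
        exact congrArg (Real.sqrt (s.card : ℝ) * ·)
          (congrArg Real.sqrt (Finset.sum_congr rfl fun i _ => Real.sq_sqrt (hnn i)))
    _ ≤ Real.sqrt (k : ℝ) * Real.sqrt (∑ i, lam i) := by
        have h4 : ∑ i ∈ s, lam i ≤ ∑ i, lam i :=
          Finset.sum_le_sum_of_subset_of_nonneg (Finset.filter_subset _ _)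
            (fun i _ _ => hnn i)
        exact mul_le_mul (Real.sqrt_le_sqrt hcard) (Real.sqrt_le_sqrt h4)
          (Real.sqrt_nonneg _) (Real.sqrt_nonneg _)

/-! ### Orthogonal projection onto the column space -/

lemma exists_proj (A : Matrix (Fin m) (Fin n) ℝ) :
    ∃ P : Matrix (Fin m) (Fin m) ℝ, Pᴴ = P ∧ P * P = P ∧ P * A = A ∧ P.rank ≤ A.rank := by
  have hp : (A * Aᴴ).PosSemidef := posSemidef_self_mul_conjTranspose A
  set hH : (A * Aᴴ).IsHermitian := hp.1 with hhH
  set P := fcal hH (fun t => t * t⁻¹) with hPdef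
  have hmul := fcal_mul hH (fun t => t * t⁻¹) (fun t => t)
  rw [fcal_id] at hmul
  have hPG : P * (A * Aᴴ) = A * Aᴴ := by
    rw [hPdef, hmul]
    exact (congrArg (fcal hH)
      (by funext t; rcases eq_or_ne t 0 with h | h <;> field_simp [h] : (fun t : ℝ => t * t⁻¹ * t) = fun t => t)).trans (fcal_id hH)
  refine ⟨P, fcal_conjTranspose hH _, ?_, ?_, ?_⟩
  · rw [hPdef, fcal_mul]
    exact congrArg (fcal hH) (by funext t; rcases eq_or_ne t 0 with h | h <;> field_simp [h])
  · have h2 : (P - 1) * (A * Aᴴ) = 0 := by rw [sub_mul, one_mul, hPG, sub_self]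
    have h3 := (mul_self_mul_conjTranspose_eq_zero A (P - 1)).mp h2
    rw [Matrix.sub_mul, Matrix.one_mul, sub_eq_zero] at h3
    exact h3
  · have hmul2 := fcal_mul hH (fun t => t) (fun t => t⁻¹)
    rw [fcal_id] at hmul2
    have h1 : P = (A * Aᴴ) * fcal hH (fun t => t⁻¹) := by rw [hPdef, hmul2]
    rw [h1]
    calc ((A * Aᴴ) * fcal hH (fun t => t⁻¹)).rank ≤ (A * Aᴴ).rank := rank_mul_le_left _ _
      _ ≤ A.rank := le_of_eq (rank_self_mul_conjTranspose A)

/-! ### Frobenius norm and projections -/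

lemma tip_proj_right (X : Matrix (Fin m) (Fin n) ℝ) (Q : Matrix (Fin n) (Fin n) ℝ)
    (hQ : Qᴴ = Q) (hQ2 : Q * Q = Q) :
    tip (X * Q) (X * Q) + tip (X * (1 - Q)) (X * (1 - Q)) = tip X X := by
  have key : ∀ R : Matrix (Fin n) (Fin n) ℝ, Rᴴ = R → R * R = R →
      tip (X * R) (X * R) = ((Xᴴ * X) * R).trace := by
    intro R hR hR2
    rw [tip_eq_trace]
    have e : (X * R)ᴴ * (X * R) = R * (Xᴴ * X) * R := by
      rw [conjTranspose_mul, hR]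
      simp only [Matrix.mul_assoc]
    rw [e, ← trace_mul_cycle (Xᴴ * X) R R, Matrix.mul_assoc, hR2]
  have hQ' : (1 - Q)ᴴ = 1 - Q := by rw [conjTranspose_sub, conjTranspose_one, hQ]
  have hqq : (1 - Q) * (1 - Q) = 1 - Q := by
    rw [mul_sub, mul_one, sub_mul, one_mul, hQ2, sub_self, sub_zero]
  rw [key Q hQ hQ2, key (1 - Q) hQ' hqq, tip_eq_trace, ← trace_add, ← mul_add,
    add_sub_cancel, mul_one]

lemma tip_proj_left (X : Matrix (Fin m) (Fin n) ℝ) (P : Matrix (Fin m) (Fin m) ℝ)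
    (hP : Pᴴ = P) (hP2 : P * P = P) :
    tip (P * X) (P * X) + tip ((1 - P) * X) ((1 - P) * X) = tip X X := by
  have key : ∀ R : Matrix (Fin m) (Fin m) ℝ, Rᴴ = R → R * R = R →
      tip (R * X) (R * X) = (Xᴴ * (R * X)).trace := by
    intro R hR hR2
    rw [tip_eq_trace]
    have e : (R * X)ᴴ * (R * X) = Xᴴ * ((R * R) * X) := by
      rw [conjTranspose_mul, hR]
      simp only [Matrix.mul_assoc]
    rw [e, hR2]
  have hP' : (1 - P)ᴴ = 1 - P := by rw [conjTranspose_sub, conjTranspose_one, hP]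
  have hpp : (1 - P) * (1 - P) = 1 - P := by
    rw [mul_sub, mul_one, sub_mul, one_mul, hP2, sub_self, sub_zero]
  rw [key P hP hP2, key (1 - P) hP' hpp, tip_eq_trace, ← trace_add, ← Matrix.mul_add,
    ← Matrix.add_mul, add_sub_cancel, Matrix.one_mul]

lemma sqrt_add_le (a b : ℝ) (ha : 0 ≤ a) (hb : 0 ≤ b) :
    Real.sqrt a + Real.sqrt b ≤ Real.sqrt 2 * Real.sqrt (a + b) := by
  have key : (Real.sqrt a + Real.sqrt b) ^ 2 ≤ 2 * (a + b) := by
    nlinarith [Real.sq_sqrt ha, Real.sq_sqrt hb, sq_nonneg (Real.sqrt a - Real.sqrt b),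
      Real.sqrt_nonneg a, Real.sqrt_nonneg b]
  calc Real.sqrt a + Real.sqrt b
      = Real.sqrt ((Real.sqrt a + Real.sqrt b) ^ 2) := (Real.sqrt_sq (by positivity)).symm
    _ ≤ Real.sqrt (2 * (a + b)) := Real.sqrt_le_sqrt key
    _ = Real.sqrt 2 * Real.sqrt (a + b) := Real.sqrt_mul (by norm_num) _

end NNC

/-- Lemma: nuclear norm comparison inequality. -/
theorem nuclear_norm_comparison
    (d₁ d₂ rs : ℕ) (hrs : 1 ≤ rs)
    (M Mst : Matrix (Fin d₁) (Fin d₂) ℝ) (hMst : Mst.rank ≤ rs) :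
    nucNorm Mst - nucNorm M + nucNorm (M - Mst) ≤
      (1 + Real.sqrt 2) * Real.sqrt rs * frob (M - Mst) := by
  obtain ⟨P, hP, hP2, hPMst, hPrank⟩ := NNC.exists_proj Mst
  obtain ⟨Q, hQ, hQ2, hQMst', hQrank⟩ := NNC.exists_proj Mstᴴ
  have hMQ : Mst * Q = Mst := by
    have h := congrArg conjTranspose hQMst'
    rwa [conjTranspose_mul, conjTranspose_conjTranspose, hQ] at h
  set Δ : Matrix (Fin d₁) (Fin d₂) ℝ := M - Mst with hΔ
  have hPr : P.rank ≤ rs := le_trans hPrank hMst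
  have hQr : Q.rank ≤ rs := le_trans hQrank (by rw [Mst.rank_conjTranspose]; exact hMst)
  have h1P : (1 - P) * Mst = 0 := by rw [Matrix.sub_mul, Matrix.one_mul, hPMst, sub_self]
  have hDelta1 : (1 - P) * Δ = (1 - P) * M := by
    rw [hΔ, Matrix.mul_sub, h1P, sub_zero]
  have hs1 : nucNorm Mst ≤ nucNorm (P * M * Q) + nucNorm (P * Δ * Q) := by
    have hid : P * Δ * Q = P * M * Q - Mst := by
      rw [hΔ, Matrix.mul_sub, Matrix.sub_mul, hPMst, hMQ]
    have hid2 : Mst = P * M * Q + -(P * Δ * Q) := by rw [hid]; abel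
    calc nucNorm Mst = nucNorm (P * M * Q + -(P * Δ * Q)) := by rw [← hid2]
      _ ≤ nucNorm (P * M * Q) + nucNorm (-(P * Δ * Q)) := NNC.nucNorm_add_le _ _
      _ = nucNorm (P * M * Q) + nucNorm (P * Δ * Q) := by rw [NNC.nucNorm_neg]
  have hs2 : nucNorm (P * M * Q) + nucNorm ((1 - P) * M * (1 - Q)) ≤ nucNorm M :=
    NNC.pinch M P Q hP hP2 hQ hQ2
  have hdec : Δ = P * Δ + ((1 - P) * Δ * Q + (1 - P) * Δ * (1 - Q)) := by
    have h1 : (1 - P) * Δ * Q + (1 - P) * Δ * (1 - Q) = (1 - P) * Δ := by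
      rw [← Matrix.mul_add, add_sub_cancel, Matrix.mul_one]
    rw [h1, ← Matrix.add_mul, add_sub_cancel, Matrix.one_mul]
  have hs3 : nucNorm Δ ≤ nucNorm (P * Δ) +
      (nucNorm ((1 - P) * Δ * Q) + nucNorm ((1 - P) * M * (1 - Q))) := by
    have h4 : (1 - P) * Δ * (1 - Q) = (1 - P) * M * (1 - Q) := by rw [hDelta1]
    calc nucNorm Δ = nucNorm (P * Δ + ((1 - P) * Δ * Q + (1 - P) * Δ * (1 - Q))) := by
          rw [← hdec]
      _ ≤ nucNorm (P * Δ) + nucNorm ((1 - P) * Δ * Q + (1 - P) * Δ * (1 - Q)) :=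
          NNC.nucNorm_add_le _ _
      _ ≤ nucNorm (P * Δ) + (nucNorm ((1 - P) * Δ * Q) + nucNorm ((1 - P) * Δ * (1 - Q))) :=
          add_le_add_right (NNC.nucNorm_add_le _ _) _
      _ = _ := by rw [h4]
  have b1 : nucNorm (P * Δ * Q) ≤ Real.sqrt rs * frob (P * Δ * Q) :=
    NNC.nucNorm_le_sqrt_rank_mul_frob _
      (le_trans (le_trans (rank_mul_le_left _ _) (rank_mul_le_left _ _)) hPr)
  have b2 : nucNorm (P * Δ) ≤ Real.sqrt rs * frob (P * Δ) :=
    NNC.nucNorm_le_sqrt_rank_mul_frob _ (le_trans (rank_mul_le_left _ _) hPr)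
  have b3 : nucNorm ((1 - P) * Δ * Q) ≤ Real.sqrt rs * frob ((1 - P) * Δ * Q) :=
    NNC.nucNorm_le_sqrt_rank_mul_frob _ (le_trans (rank_mul_le_right _ _) hQr)
  have f1 : frob (P * Δ) ≤ frob Δ := by
    have h := NNC.tip_proj_left Δ P hP hP2
    have h2 : tip (P * Δ) (P * Δ) ≤ tip Δ Δ := by
      have := NNC.tip_self_nonneg ((1 - P) * Δ); linarith
    rw [NNC.frob_eq_sqrt_tip, NNC.frob_eq_sqrt_tip]
    exact Real.sqrt_le_sqrt h2
  have f2 : frob (P * Δ * Q) + frob ((1 - P) * Δ * Q) ≤ Real.sqrt 2 * frob Δ := by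
    have hpyL := NNC.tip_proj_left (Δ * Q) P hP hP2
    have hpyR := NNC.tip_proj_right Δ Q hQ hQ2
    have hQle : tip (Δ * Q) (Δ * Q) ≤ tip Δ Δ := by
      have := NNC.tip_self_nonneg (Δ * (1 - Q)); linarith
    have e1 : P * Δ * Q = P * (Δ * Q) := Matrix.mul_assoc _ _ _
    have e2 : (1 - P) * Δ * Q = (1 - P) * (Δ * Q) := Matrix.mul_assoc _ _ _
    rw [e1, e2, NNC.frob_eq_sqrt_tip, NNC.frob_eq_sqrt_tip, NNC.frob_eq_sqrt_tip]
    calc Real.sqrt (tip (P * (Δ * Q)) (P * (Δ * Q)))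
          + Real.sqrt (tip ((1 - P) * (Δ * Q)) ((1 - P) * (Δ * Q)))
        ≤ Real.sqrt 2 * Real.sqrt (tip (P * (Δ * Q)) (P * (Δ * Q))
            + tip ((1 - P) * (Δ * Q)) ((1 - P) * (Δ * Q))) :=
          NNC.sqrt_add_le _ _ (NNC.tip_self_nonneg _) (NNC.tip_self_nonneg _)
      _ = Real.sqrt 2 * Real.sqrt (tip (Δ * Q) (Δ * Q)) := by rw [hpyL]
      _ ≤ Real.sqrt 2 * Real.sqrt (tip Δ Δ) :=
          mul_le_mul_of_nonneg_left (Real.sqrt_le_sqrt hQle) (Real.sqrt_nonneg _)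
  have hrsnn : (0 : ℝ) ≤ Real.sqrt rs := Real.sqrt_nonneg _
  have key : nucNorm Mst - nucNorm M + nucNorm Δ
      ≤ nucNorm (P * Δ * Q) + nucNorm (P * Δ) + nucNorm ((1 - P) * Δ * Q) := by linarith
  have hmul := mul_le_mul_of_nonneg_left f2 hrsnn
  have hmul2 := mul_le_mul_of_nonneg_left f1 hrsnn
  have final : nucNorm (P * Δ * Q) + nucNorm (P * Δ) + nucNorm ((1 - P) * Δ * Q)
      ≤ (1 + Real.sqrt 2) * Real.sqrt rs * frob Δ := by nlinarith
  calc nucNorm Mst - nucNorm M + nucNorm (M - Mst)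
      = nucNorm Mst - nucNorm M + nucNorm Δ := by rw [hΔ]
    _ ≤ nucNorm (P * Δ * Q) + nucNorm (P * Δ) + nucNorm ((1 - P) * Δ * Q) := key
    _ ≤ (1 + Real.sqrt 2) * Real.sqrt rs * frob Δ := final
    _ = (1 + Real.sqrt 2) * Real.sqrt rs * frob (M - Mst) := by rw [hΔ]

end
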